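/- arXiv:0912.0841 — 2 statements merged into one kernel-verified Lean document; each statement's English description precedes it below -/
import Mathlib

section
/- Let Ω ⊆ ℂⁿ be open, let φ : Ω → ℝ be of class C², and let f ∈ C_c^∞(Ω). Then Σ_{l=1}^{2n} ∫_Ω |∂_l f − (∂_l φ) f|² e^{−φ} dλ = Σ_{l=1}^{2n} ∫_Ω |∂_l f|² e^{−φ} dλ + ∫_Ω (Δφ) |f|² e^{−φ} dλ. -/
open MeasureTheory Complex Metric Filter
noncomputable section

/-- `ℂⁿ` with its Euclidean inner product and norm. -/
abbrev Cn (n : ℕ) := EuclideanSpace ℂ (Fin n)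

instance {n : ℕ} : MeasurableSpace (Cn n) :=
  MeasurableSpace.comap (WithLp.ofLp : Cn n → (Fin n → ℂ)) MeasurableSpace.pi

/-- Lebesgue measure on `ℂⁿ ≅ ℝ^{2n}`. -/
instance {n : ℕ} : MeasureSpace (Cn n) :=
  ⟨MeasureTheory.Measure.map (WithLp.toLp 2 : (Fin n → ℂ) → Cn n)
    (MeasureTheory.Measure.pi fun _ => volume)⟩

/-- The real coordinate direction indexed by `(j, b)`: the `x_j`-direction if `b = false`,
the `y_j`-direction if `b = true`. -/
def dir {n : ℕ} (l : Fin n × Bool) : Cn n :=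
  EuclideanSpace.single l.1 (if l.2 then Complex.I else 1)

/-- The real partial derivative `∂_l`, `l` ranging over the `2n` real coordinate
directions of `ℂⁿ`. -/
def pd {n : ℕ} {F : Type} [NormedAddCommGroup F] [NormedSpace ℝ F]
    (l : Fin n × Bool) (f : Cn n → F) (z : Cn n) : F :=
  fderiv ℝ f z (dir l)

/-- The real Laplacian `Δφ = Σ_l ∂_l ∂_l φ`. -/
def lap {n : ℕ} (φ : Cn n → ℝ) (z : Cn n) : ℝ :=
  ∑ l : Fin n × Bool, pd l (pd l φ) z

/-- `|∇φ|²`, the squared norm of the real gradient. -/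
def gradSq {n : ℕ} (φ : Cn n → ℝ) (z : Cn n) : ℝ :=
  ∑ l : Fin n × Bool, (pd l φ z)^2

/-- The Levi form `L_u(z;t) = ¼(D²u(z)(t,t) + D²u(z)(it,it))`. -/
def levi {n : ℕ} (u : Cn n → ℝ) (z t : Cn n) : ℝ :=
  (1/4) * (fderiv ℝ (fun w => fderiv ℝ u w t) z t
    + fderiv ℝ (fun w => fderiv ℝ u w (Complex.I • t)) z (Complex.I • t))

/-- The Wirtinger derivative `∂g/∂z_j = ½(∂g/∂x_j − i ∂g/∂y_j)` of a complex-valued function. -/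
def wz {n : ℕ} (j : Fin n) (g : Cn n → ℂ) (z : Cn n) : ℂ :=
  (1/2) * (pd (j, false) g z - Complex.I * pd (j, true) g z)

/-- The Wirtinger derivative `∂g/∂z̄_j = ½(∂g/∂x_j + i ∂g/∂y_j)` of a complex-valued function. -/
def wzbar {n : ℕ} (j : Fin n) (g : Cn n → ℂ) (z : Cn n) : ℂ :=
  (1/2) * (pd (j, false) g z + Complex.I * pd (j, true) g z)

/-- The Wirtinger derivative `∂φ/∂z_j` of a real-valued function. -/
def wzR {n : ℕ} (j : Fin n) (φ : Cn n → ℝ) (z : Cn n) : ℂ :=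
  (1/2) * (Complex.ofReal (pd (j, false) φ z) - Complex.I * Complex.ofReal (pd (j, true) φ z))

/-- The Wirtinger derivative `∂φ/∂z̄_j` of a real-valued function. -/
def wzbarR {n : ℕ} (j : Fin n) (φ : Cn n → ℝ) (z : Cn n) : ℂ :=
  (1/2) * (Complex.ofReal (pd (j, false) φ z) + Complex.I * Complex.ofReal (pd (j, true) φ z))

/-- The complex Hessian coefficient `∂²φ/∂z_j∂z̄_k`. -/
def hess {n : ℕ} (φ : Cn n → ℝ) (j k : Fin n) (z : Cn n) : ℂ :=
  wz j (fun w => wzbarR k φ w) z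

/-- `∂̄*_φ f = −Σ_j (∂f_j/∂z_j − (∂φ/∂z_j) f_j)` for a `(0,1)`-form `f = (f_1,…,f_n)`. -/
def dbarStar {n : ℕ} (φ : Cn n → ℝ) (f : Fin n → Cn n → ℂ) (z : Cn n) : ℂ :=
  -∑ j, (wz j (f j) z - wzR j φ z * f j z)

/-- `f ∈ C_c^∞(Ω)`: smooth, compactly supported, with support inside `Ω`. -/
def SmoothCompSupp {n : ℕ} (Ω : Set (Cn n)) (f : Cn n → ℂ) : Prop :=
  ContDiff ℝ (⊤ : ℕ∞) f ∧ HasCompactSupport f ∧ tsupport f ⊆ Ω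


namespace Stmt0Aux

instance {n : ℕ} : BorelSpace (Cn n) :=
  ⟨(PiLp.borelSpace 2 (X := fun _ : Fin n => ℂ)).measurable_eq⟩

instance {n : ℕ} : (volume : Measure (Cn n)).IsAddHaarMeasure :=
  (PiLp.continuousLinearEquiv 2 ℂ (fun _ : Fin n => ℂ)).symm.isAddHaarMeasure_map
    (MeasureTheory.Measure.pi fun _ : Fin n => (volume : Measure ℂ))

lemma normsq_eq (w : ℂ) : ‖w‖^2 = w.re^2 + w.im^2 := by
  rw [Complex.sq_norm, Complex.normSq_apply]; ring

lemma continuous_patch {n : ℕ} {Ω K : Set (Cn n)} (hΩ : IsOpen Ω) (hK : IsClosed K)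
    (hKΩ : K ⊆ Ω) {g : Cn n → ℝ} (h1 : ContinuousOn g Ω) (h0 : ∀ z ∉ K, g z = 0) :
    Continuous g := by
  rw [continuous_iff_continuousAt]
  intro z
  by_cases hz : z ∈ Ω
  · exact h1.continuousAt (hΩ.mem_nhds hz)
  · have hzK : z ∉ K := fun h => hz (hKΩ h)
    have hev : g =ᶠ[nhds z] (fun _ => 0) :=
      Filter.eventually_of_mem (hK.isOpen_compl.mem_nhds hzK) h0
    exact continuousAt_const.congr hev.symm

lemma contDiff_patch {n : ℕ} {Ω K : Set (Cn n)} (hΩ : IsOpen Ω) (hK : IsClosed K)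
    (hKΩ : K ⊆ Ω) {g : Cn n → ℝ} (h1 : ContDiffOn ℝ 1 g Ω) (h0 : ∀ z ∉ K, g z = 0) :
    ContDiff ℝ 1 g := by
  rw [contDiff_iff_contDiffAt]
  intro z
  by_cases hz : z ∈ Ω
  · exact h1.contDiffAt (hΩ.mem_nhds hz)
  · have hzK : z ∉ K := fun h => hz (hKΩ h)
    have hev : g =ᶠ[nhds z] (fun _ => (0:ℝ)) :=
      Filter.eventually_of_mem (hK.isOpen_compl.mem_nhds hzK) h0
    exact (contDiffAt_const (c := (0:ℝ))).congr_of_eventuallyEq hev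

lemma integrable_patch {n : ℕ} {Ω K : Set (Cn n)} (hΩ : IsOpen Ω) (hK : IsCompact K)
    (hKΩ : K ⊆ Ω) {g : Cn n → ℝ} (h1 : ContinuousOn g Ω) (h0 : ∀ z ∉ K, g z = 0) :
    Integrable g := by
  have hc := continuous_patch hΩ hK.isClosed hKΩ h1 h0
  exact hc.integrable_of_hasCompactSupport (HasCompactSupport.intro hK h0)

lemma norm_sub_sq' (A B : ℂ) (c : ℝ) :
    ‖A - (c : ℂ) * B‖^2
      = ‖A‖^2 - 2 * ((starRingEnd ℂ) B * A).re * c + c^2 * ‖B‖^2 := by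
  simp only [normsq_eq, Complex.sub_re, Complex.sub_im, Complex.mul_re, Complex.mul_im,
    Complex.ofReal_re, Complex.ofReal_im, Complex.conj_re, Complex.conj_im]
  ring

section Main

variable {n : ℕ} {Ω : Set (Cn n)} {φ : Cn n → ℝ} {f : Cn n → ℂ}

lemma pd_f_zero (hf : SmoothCompSupp Ω f) (l : Fin n × Bool) {z : Cn n}
    (hz : z ∉ tsupport f) : pd l f z = 0 := by
  have hev : f =ᶠ[nhds z] (fun _ => (0:ℂ)) :=
    Filter.eventually_of_mem ((isClosed_tsupport f).isOpen_compl.mem_nhds hz)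
      (fun x hx => image_eq_zero_of_notMem_tsupport hx)
  rw [pd, hev.fderiv_eq]
  simp

lemma contDiffOn_c (hΩ : IsOpen Ω) (hφ : ContDiffOn ℝ 2 φ Ω) (l : Fin n × Bool) :
    ContDiffOn ℝ 1 (fun z => pd l φ z) Ω := by
  simp only [pd]
  exact (hφ.fderiv_of_isOpen hΩ (by norm_num)).clm_apply contDiffOn_const

lemma continuousOn_q (hΩ : IsOpen Ω) (hφ : ContDiffOn ℝ 2 φ Ω) (l : Fin n × Bool) :
    ContinuousOn (fun z => pd l (pd l φ) z) Ω := by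
  have h1 := (contDiffOn_c hΩ hφ l).continuousOn_fderiv_of_isOpen hΩ le_rfl
  simp only [pd]
  exact h1.clm_apply continuousOn_const

lemma continuous_pdf (hf : SmoothCompSupp Ω f) (l : Fin n × Bool) :
    Continuous (fun z => pd l f z) := by
  simp only [pd]
  exact (hf.1.continuous_fderiv (by simp)).clm_apply continuous_const

lemma continuousOn_E (hφ : ContDiffOn ℝ 2 φ Ω) :
    ContinuousOn (fun z => Real.exp (-φ z)) Ω :=
  Real.continuous_exp.comp_continuousOn hφ.continuousOn.neg

/-- The key per-direction identity. -/
lemma perl (hΩ : IsOpen Ω) (hφ : ContDiffOn ℝ 2 φ Ω) (hf : SmoothCompSupp Ω f)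
    (l : Fin n × Bool) :
    (∫ z, ‖pd l f z - Complex.ofReal (pd l φ z) * f z‖^2 * Real.exp (-φ z))
      = (∫ z, ‖pd l f z‖^2 * Real.exp (-φ z))
        + ∫ z, pd l (pd l φ) z * ‖f z‖^2 * Real.exp (-φ z) := by
  obtain ⟨hfs, hfc, hfΩ⟩ := id hf
  have hKc : IsClosed (tsupport f) := isClosed_tsupport f
  have hKcp : IsCompact (tsupport f) := hfc
  have hKΩ : tsupport f ⊆ Ω := hfΩ
  have hf0 : ∀ z ∉ tsupport f, f z = 0 := fun z hz => image_eq_zero_of_notMem_tsupport hz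
  have hpdf0 : ∀ z ∉ tsupport f, pd l f z = 0 := fun z hz => pd_f_zero hf l hz
  -- continuity facts
  have hfcont : Continuous f := hfs.continuous
  have hpdfc : Continuous (fun z => pd l f z) := continuous_pdf hf l
  have hcC1 : ContDiffOn ℝ 1 (fun z => pd l φ z) Ω := contDiffOn_c hΩ hφ l
  have hccont : ContinuousOn (fun z => pd l φ z) Ω := hcC1.continuousOn
  have hqcont : ContinuousOn (fun z => pd l (pd l φ) z) Ω := continuousOn_q hΩ hφ l
  have hEcont : ContinuousOn (fun z => Real.exp (-φ z)) Ω := continuousOn_E hφ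
  have hNcont : Continuous (fun z => ‖f z‖^2) := (hfcont.norm.pow 2)
  have hrcont : Continuous (fun z => ((starRingEnd ℂ) (f z) * pd l f z).re) :=
    Complex.continuous_re.comp ((continuous_star.comp hfcont).mul hpdfc)
  -- integrability of all pieces
  have int1 : Integrable (fun z =>
      2 * ((starRingEnd ℂ) (f z) * pd l f z).re * pd l φ z * Real.exp (-φ z)) := by
    apply integrable_patch hΩ hKcp hKΩ
    · exact (((continuousOn_const.mul hrcont.continuousOn).mul hccont).mul hEcont)
    · intro z hz; simp [hf0 z hz]
  have int2 : Integrable (fun z =>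
      ‖f z‖^2 * pd l (pd l φ) z * Real.exp (-φ z)) := by
    apply integrable_patch hΩ hKcp hKΩ
    · exact ((hNcont.continuousOn.mul hqcont).mul hEcont)
    · intro z hz; simp [hf0 z hz]
  have int3 : Integrable (fun z =>
      ‖f z‖^2 * (pd l φ z)^2 * Real.exp (-φ z)) := by
    apply integrable_patch hΩ hKcp hKΩ
    · exact ((hNcont.continuousOn.mul (hccont.pow 2)).mul hEcont)
    · intro z hz; simp [hf0 z hz]
  have int4 : Integrable (fun z => ‖pd l f z‖^2 * Real.exp (-φ z)) := by
    apply integrable_patch hΩ hKcp hKΩ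
    · exact ((hpdfc.norm.pow 2).continuousOn.mul hEcont)
    · intro z hz; simp [hpdf0 z hz]
  have int5 : Integrable (fun z =>
      ‖pd l f z - Complex.ofReal (pd l φ z) * f z‖^2 * Real.exp (-φ z)) := by
    apply integrable_patch hΩ hKcp hKΩ
    · exact ((((hpdfc.continuousOn.sub
        ((Complex.continuous_ofReal.comp_continuousOn hccont).mul
          hfcont.continuousOn)).norm.pow 2)).mul hEcont)
    · intro z hz; simp [hf0 z hz, hpdf0 z hz]
  have intg : Integrable (fun z => ‖f z‖^2 * pd l φ z * Real.exp (-φ z)) := by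
    apply integrable_patch hΩ hKcp hKΩ
    · exact ((hNcont.continuousOn.mul hccont).mul hEcont)
    · intro z hz; simp [hf0 z hz]
  -- g is C¹
  have hNeq : (fun z : Cn n => ‖f z‖^2) = fun z => (f z).re^2 + (f z).im^2 :=
    funext fun z => normsq_eq (f z)
  have hf1 : ContDiff ℝ 1 f := hfs.of_le (by exact_mod_cast le_top)
  have hNC : ContDiff ℝ 1 (fun z : Cn n => ‖f z‖^2) := by
    rw [hNeq]
    exact ((Complex.reCLM.contDiff.comp hf1).pow 2).add
      ((Complex.imCLM.contDiff.comp hf1).pow 2)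
  have hEC1 : ContDiffOn ℝ 1 (fun z => Real.exp (-φ z)) Ω :=
    ((hφ.of_le one_le_two).neg).exp
  have hg0 : ∀ z ∉ tsupport f, ‖f z‖^2 * pd l φ z * Real.exp (-φ z) = 0 := by
    intro z hz; simp [hf0 z hz]
  have hgC1 : ContDiff ℝ 1 (fun z => ‖f z‖^2 * pd l φ z * Real.exp (-φ z)) :=
    contDiff_patch hΩ hKc hKΩ ((hNC.contDiffOn.mul hcC1).mul hEC1) hg0
  -- the derivative formula
  have hDg : ∀ z, fderiv ℝ (fun w => ‖f w‖^2 * pd l φ w * Real.exp (-φ w)) z (dir l)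
      = 2 * ((starRingEnd ℂ) (f z) * pd l f z).re * pd l φ z * Real.exp (-φ z)
        + ‖f z‖^2 * pd l (pd l φ) z * Real.exp (-φ z)
        - ‖f z‖^2 * (pd l φ z)^2 * Real.exp (-φ z) := by
    intro z
    by_cases hz : z ∈ Ω
    · have hmem := hΩ.mem_nhds hz
      have hφd : DifferentiableAt ℝ φ z :=
        ((hφ.differentiableOn (by norm_num)).differentiableAt hmem)
      have hEz : HasFDerivAt (fun w => Real.exp (-φ w))
          (Real.exp (-φ z) • (-(fderiv ℝ φ z))) z := (hφd.hasFDerivAt.neg).exp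
      have hcz : HasFDerivAt (fun w => pd l φ w)
          (fderiv ℝ (fun w => pd l φ w) z) z :=
        ((hcC1.differentiableOn one_ne_zero).differentiableAt hmem).hasFDerivAt
      have hfz : HasFDerivAt f (fderiv ℝ f z) z := (hfs.differentiable (by simp) z).hasFDerivAt
      have hrez : HasFDerivAt (fun w => (f w).re)
          (Complex.reCLM.comp (fderiv ℝ f z)) z := Complex.reCLM.hasFDerivAt.comp z hfz
      have himz : HasFDerivAt (fun w => (f w).im)
          (Complex.imCLM.comp (fderiv ℝ f z)) z := Complex.imCLM.hasFDerivAt.comp z hfz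
      have hNz : HasFDerivAt (fun w : Cn n => ‖f w‖^2)
          (((f z).re • (Complex.reCLM.comp (fderiv ℝ f z))
             + (f z).re • (Complex.reCLM.comp (fderiv ℝ f z)))
           + ((f z).im • (Complex.imCLM.comp (fderiv ℝ f z))
             + (f z).im • (Complex.imCLM.comp (fderiv ℝ f z)))) z := by
        rw [hNeq]
        simpa [pow_two] using ((hrez.fun_mul hrez).fun_add (himz.fun_mul himz))
      have hgz := (hNz.fun_mul hcz).fun_mul hEz
      rw [hgz.fderiv]
      have hcd : fderiv ℝ (fun w => pd l φ w) z (dir l) = pd l (pd l φ) z := rfl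
      simp only [ContinuousLinearMap.add_apply, ContinuousLinearMap.smul_apply,
        ContinuousLinearMap.coe_comp', Function.comp_apply, ContinuousLinearMap.neg_apply,
        smul_eq_mul, hcd]
      have hpd1 : fderiv ℝ φ z (dir l) = pd l φ z := rfl
      have hpd2 : fderiv ℝ f z (dir l) = pd l f z := rfl
      rw [hpd1, hpd2]
      simp only [Complex.reCLM_apply, Complex.imCLM_apply, Complex.mul_re,
        Complex.conj_re, Complex.conj_im]
      ring
    · have hzK : z ∉ tsupport f := fun h => hz (hKΩ h)
      have hev : (fun w => ‖f w‖^2 * pd l φ w * Real.exp (-φ w)) =ᶠ[nhds z]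
          (fun _ => (0:ℝ)) :=
        Filter.eventually_of_mem (hKc.isOpen_compl.mem_nhds hzK) hg0
      rw [hev.fderiv_eq]
      simp [hf0 z hzK, hpdf0 z hzK]
  -- integration by parts: the integral of the derivative vanishes
  have hzero : (∫ z, fderiv ℝ (fun w => ‖f w‖^2 * pd l φ w * Real.exp (-φ w)) z (dir l)) = 0 := by
    have h := integral_mul_fderiv_eq_neg_fderiv_mul_of_integrable
      (μ := volume) (f := fun _ : Cn n => (1:ℝ))
      (g := fun w => ‖f w‖^2 * pd l φ w * Real.exp (-φ w)) (v := dir l)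
      ?_ ?_ ?_ (fun x _ => differentiableAt_const (1:ℝ)) (fun x _ => hgC1.differentiable one_ne_zero x)
    · simpa using h
    · have : (fun z : Cn n => fderiv ℝ (fun _ => (1:ℝ)) z (dir l)
          * (‖f z‖^2 * pd l φ z * Real.exp (-φ z))) = fun _ => (0:ℝ) := by
        funext z; simp
      rw [this]
      exact integrable_zero _ _ _
    · simp only [one_mul]
      have : (fun z : Cn n => fderiv ℝ (fun w => ‖f w‖^2 * pd l φ w * Real.exp (-φ w)) z (dir l))
          = fun z => 2 * ((starRingEnd ℂ) (f z) * pd l f z).re * pd l φ z * Real.exp (-φ z)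
            + ‖f z‖^2 * pd l (pd l φ) z * Real.exp (-φ z)
            - ‖f z‖^2 * (pd l φ z)^2 * Real.exp (-φ z) := funext hDg
      rw [this]
      exact (int1.add int2).sub int3
    · simpa using intg
  have hsplit : (∫ z, (2 * ((starRingEnd ℂ) (f z) * pd l f z).re * pd l φ z * Real.exp (-φ z)
        + ‖f z‖^2 * pd l (pd l φ) z * Real.exp (-φ z)
        - ‖f z‖^2 * (pd l φ z)^2 * Real.exp (-φ z))) = 0 := by
    rw [(funext hDg :
      (fun z => fderiv ℝ (fun w => ‖f w‖^2 * pd l φ w * Real.exp (-φ w)) z (dir l))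
        = fun z => 2 * ((starRingEnd ℂ) (f z) * pd l f z).re * pd l φ z * Real.exp (-φ z)
            + ‖f z‖^2 * pd l (pd l φ) z * Real.exp (-φ z)
            - ‖f z‖^2 * (pd l φ z)^2 * Real.exp (-φ z))] at hzero
    exact hzero
  have hadd : Integrable (fun z =>
      2 * ((starRingEnd ℂ) (f z) * pd l f z).re * pd l φ z * Real.exp (-φ z)
        + ‖f z‖^2 * pd l (pd l φ) z * Real.exp (-φ z)) := int1.add int2
  have hIBP : (∫ z, 2 * ((starRingEnd ℂ) (f z) * pd l f z).re * pd l φ z * Real.exp (-φ z))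
      = (∫ z, ‖f z‖^2 * (pd l φ z)^2 * Real.exp (-φ z))
        - ∫ z, ‖f z‖^2 * pd l (pd l φ) z * Real.exp (-φ z) := by
    have h1 : (∫ z, (2 * ((starRingEnd ℂ) (f z) * pd l f z).re * pd l φ z * Real.exp (-φ z)
          + ‖f z‖^2 * pd l (pd l φ) z * Real.exp (-φ z)
          - ‖f z‖^2 * (pd l φ z)^2 * Real.exp (-φ z)))
        = (∫ z, (2 * ((starRingEnd ℂ) (f z) * pd l f z).re * pd l φ z * Real.exp (-φ z)
          + ‖f z‖^2 * pd l (pd l φ) z * Real.exp (-φ z)))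
          - ∫ z, ‖f z‖^2 * (pd l φ z)^2 * Real.exp (-φ z) := integral_sub hadd int3
    have h2 : (∫ z, (2 * ((starRingEnd ℂ) (f z) * pd l f z).re * pd l φ z * Real.exp (-φ z)
          + ‖f z‖^2 * pd l (pd l φ) z * Real.exp (-φ z)))
        = (∫ z, 2 * ((starRingEnd ℂ) (f z) * pd l f z).re * pd l φ z * Real.exp (-φ z))
          + ∫ z, ‖f z‖^2 * pd l (pd l φ) z * Real.exp (-φ z) := integral_add int1 int2
    rw [h1, h2] at hsplit
    linarith
  -- pointwise expansion of the left integrand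
  have hexp : (fun z => ‖pd l f z - Complex.ofReal (pd l φ z) * f z‖^2 * Real.exp (-φ z))
      = fun z => ‖pd l f z‖^2 * Real.exp (-φ z)
        - 2 * ((starRingEnd ℂ) (f z) * pd l f z).re * pd l φ z * Real.exp (-φ z)
        + ‖f z‖^2 * (pd l φ z)^2 * Real.exp (-φ z) := by
    funext z
    rw [norm_sub_sq' (pd l f z) (f z) (pd l φ z)]
    ring
  have hsub : Integrable (fun z => ‖pd l f z‖^2 * Real.exp (-φ z)
      - 2 * ((starRingEnd ℂ) (f z) * pd l f z).re * pd l φ z * Real.exp (-φ z)) :=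
    int4.sub int1
  have h3 : (∫ z, (‖pd l f z‖^2 * Real.exp (-φ z)
        - 2 * ((starRingEnd ℂ) (f z) * pd l f z).re * pd l φ z * Real.exp (-φ z)
        + ‖f z‖^2 * (pd l φ z)^2 * Real.exp (-φ z)))
      = (∫ z, (‖pd l f z‖^2 * Real.exp (-φ z)
        - 2 * ((starRingEnd ℂ) (f z) * pd l f z).re * pd l φ z * Real.exp (-φ z)))
        + ∫ z, ‖f z‖^2 * (pd l φ z)^2 * Real.exp (-φ z) := integral_add hsub int3
  have h4 : (∫ z, (‖pd l f z‖^2 * Real.exp (-φ z)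
        - 2 * ((starRingEnd ℂ) (f z) * pd l f z).re * pd l φ z * Real.exp (-φ z)))
      = (∫ z, ‖pd l f z‖^2 * Real.exp (-φ z))
        - ∫ z, 2 * ((starRingEnd ℂ) (f z) * pd l f z).re * pd l φ z * Real.exp (-φ z) :=
    integral_sub int4 int1
  have h5 : (∫ z, pd l (pd l φ) z * ‖f z‖^2 * Real.exp (-φ z))
      = ∫ z, ‖f z‖^2 * pd l (pd l φ) z * Real.exp (-φ z) := by
    congr 1; funext z; ring
  rw [hexp, h3, h4, hIBP, h5]
  ring

end Main

end Stmt0Aux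

/-- the weighted integration-by-parts identity
`Σ_l ∫ |∂_l f − (∂_l φ) f|² e^{−φ} = Σ_l ∫ |∂_l f|² e^{−φ} + ∫ (Δφ)|f|² e^{−φ}`. -/
theorem stmt0 {n : ℕ} (Ω : Set (Cn n)) (hΩ : IsOpen Ω)
    (φ : Cn n → ℝ) (hφ : ContDiffOn ℝ 2 φ Ω)
    (f : Cn n → ℂ) (hf : SmoothCompSupp Ω f) :
    ∑ l : Fin n × Bool,
        ∫ z in Ω, ‖pd l f z - Complex.ofReal (pd l φ z) * f z‖^2 * Real.exp (-φ z)
      = (∑ l : Fin n × Bool, ∫ z in Ω, ‖pd l f z‖^2 * Real.exp (-φ z))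
        + ∫ z in Ω, lap φ z * ‖f z‖^2 * Real.exp (-φ z) := by
  classical
  obtain ⟨hfs, hfc, hfΩ⟩ := id hf
  have hKΩ : tsupport f ⊆ Ω := hfΩ
  have hf0 : ∀ z ∉ tsupport f, f z = 0 := fun z hz => image_eq_zero_of_notMem_tsupport hz
  have hvan : ∀ z ∉ Ω, z ∉ tsupport f := fun z hz hk => hz (hKΩ hk)
  -- convert set integrals to full-space integrals
  have e1 : ∀ l : Fin n × Bool,
      (∫ z in Ω, ‖pd l f z - Complex.ofReal (pd l φ z) * f z‖^2 * Real.exp (-φ z))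
        = ∫ z, ‖pd l f z - Complex.ofReal (pd l φ z) * f z‖^2 * Real.exp (-φ z) := by
    intro l
    apply setIntegral_eq_integral_of_forall_compl_eq_zero
    intro z hz
    simp [hf0 z (hvan z hz), Stmt0Aux.pd_f_zero hf l (hvan z hz)]
  have e2 : ∀ l : Fin n × Bool,
      (∫ z in Ω, ‖pd l f z‖^2 * Real.exp (-φ z))
        = ∫ z, ‖pd l f z‖^2 * Real.exp (-φ z) := by
    intro l
    apply setIntegral_eq_integral_of_forall_compl_eq_zero
    intro z hz
    simp [Stmt0Aux.pd_f_zero hf l (hvan z hz)]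
  have e3 : (∫ z in Ω, lap φ z * ‖f z‖^2 * Real.exp (-φ z))
      = ∫ z, lap φ z * ‖f z‖^2 * Real.exp (-φ z) := by
    apply setIntegral_eq_integral_of_forall_compl_eq_zero
    intro z hz
    simp [hf0 z (hvan z hz)]
  simp only [e1, e2, e3]
  -- integrability of the Hessian pieces
  have intP2 : ∀ l : Fin n × Bool,
      Integrable (fun z => pd l (pd l φ) z * ‖f z‖^2 * Real.exp (-φ z)) := by
    intro l
    apply Stmt0Aux.integrable_patch hΩ hfc hKΩ
    · exact (((Stmt0Aux.continuousOn_q hΩ hφ l).mul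
        (hfs.continuous.norm.pow 2).continuousOn).mul (Stmt0Aux.continuousOn_E hφ))
    · intro z hz; simp [hf0 z hz]
  have hlap : (∫ z, lap φ z * ‖f z‖^2 * Real.exp (-φ z))
      = ∑ l : Fin n × Bool, ∫ z, pd l (pd l φ) z * ‖f z‖^2 * Real.exp (-φ z) := by
    rw [← integral_finset_sum _ (fun l _ => intP2 l)]
    congr 1
    funext z
    rw [lap, Finset.sum_mul, Finset.sum_mul]
  rw [hlap, ← Finset.sum_add_distrib]
  exact Finset.sum_congr rfl fun l _ => Stmt0Aux.perl hΩ hφ hf l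
end
end

section
/- Let H be a complex Hilbert space and let N : H → H be a compact, self-adjoint, injective bounded linear operator which is positive in the sense that ⟨Nx, x⟩ ≥ 0 for all x ∈ H. If (u_k) is a sequence in H such that ‖N u_k‖ = 1 for all k and N u_k converges weakly to 0, then ⟨N u_k, u_k⟩ → +∞ as k → ∞. -/
open Filter
noncomputable section

/-- if `N` is a compact, self-adjoint, injective, positive operator on a complex
Hilbert space and `(u_k)` satisfies `‖N u_k‖ = 1` with `N u_k ⇀ 0` weakly, then
`⟨N u_k, u_k⟩ → +∞`. -/
theorem stmt10 {H : Type} [NormedAddCommGroup H] [InnerProductSpace ℂ H] [CompleteSpace H]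
    (N : H →L[ℂ] H)
    (hcomp : IsCompactOperator N)
    (hsa : ∀ x y : H, (inner ℂ (N x) y : ℂ) = inner ℂ x (N y))
    (hinj : Function.Injective N)
    (hpos : ∀ x : H, 0 ≤ (inner ℂ (N x) x : ℂ).re)
    (u : ℕ → H)
    (hnorm : ∀ k, ‖N (u k)‖ = 1)
    (hweak : ∀ v : H, Tendsto (fun k => (inner ℂ (N (u k)) v : ℂ)) atTop (nhds 0)) :
    Tendsto (fun k => (inner ℂ (N (u k)) (u k) : ℂ).re) atTop atTop := by
  -- the sesquilinear form (x,y) ↦ ⟪N x, y⟫ is a positive semidefinite hermitian form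
  have CS : ∀ x y : H, ‖(inner ℂ (N x) y : ℂ)‖ * ‖(inner ℂ (N y) x : ℂ)‖ ≤
      (inner ℂ (N x) x : ℂ).re * (inner ℂ (N y) y : ℂ).re := fun x y =>
    @InnerProductSpace.Core.inner_mul_inner_self_le ℂ H _ _ _
    { inner := fun x y => inner ℂ (N x) y
      conj_inner_symm := fun x y => by
        show (starRingEnd ℂ) (inner ℂ (N y) x : ℂ) = (inner ℂ (N x) y : ℂ)
        rw [inner_conj_symm]
        exact (hsa x y).symm
      re_inner_nonneg := fun x => hpos x
      add_left := fun x y z => by simp [inner_add_left]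
      smul_left := fun x y r => by simp [inner_smul_left, mul_comm] } x y
  set y : ℕ → H := fun k => N (u k) with hy
  -- N y_k ⇀ 0 weakly
  have hweak2 : ∀ v : H, Tendsto (fun k => (inner ℂ (N (y k)) v : ℂ)) atTop (nhds 0) := by
    intro v
    have : (fun k => (inner ℂ (N (y k)) v : ℂ)) = fun k => (inner ℂ (N (u k)) (N v) : ℂ) := by
      funext k
      rw [hsa (y k) v]
    rw [this]
    exact hweak (N v)
  -- by compactness, N y_k → 0 in norm
  have hKc : IsCompact (closure (N '' Metric.closedBall (0 : H) 1)) :=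
    IsCompactOperator.isCompact_closure_image_closedBall (𝕜₁ := ℂ)
      (f := (N : H →ₗ[ℂ] H)) hcomp 1
  have hmem : ∀ k, N (y k) ∈ closure (N '' Metric.closedBall (0 : H) 1) := by
    intro k
    apply subset_closure
    exact ⟨y k, by simp [Metric.mem_closedBall, hy, hnorm k], rfl⟩
  have hstrong : Tendsto (fun k => N (y k)) atTop (nhds 0) := by
    apply tendsto_of_subseq_tendsto
    intro ns hns
    obtain ⟨a, -, φ, hφ, ha⟩ := hKc.tendsto_subseq (x := fun n => N (y (ns n)))
      (fun n => hmem (ns n))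
    refine ⟨φ, ?_⟩
    have ha0 : a = 0 := by
      have h1 : ∀ v : H, (inner ℂ a v : ℂ) = 0 := by
        intro v
        have hcont : Tendsto (fun n => (inner ℂ (N (y (ns (φ n)))) v : ℂ)) atTop
            (nhds (inner ℂ a v)) :=
          ((continuous_id.inner continuous_const).tendsto a).comp ha
        have hzero : Tendsto (fun n => (inner ℂ (N (y (ns (φ n)))) v : ℂ)) atTop (nhds 0) :=
          (hweak2 v).comp (hns.comp hφ.tendsto_atTop)
        exact tendsto_nhds_unique hcont hzero
      have := h1 a
      rwa [inner_self_eq_zero] at this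
    rwa [ha0] at ha
  have hεtend : Tendsto (fun k => ‖N (y k)‖) atTop (nhds 0) := by
    simpa using hstrong.norm
  -- key inequality : 1 ≤ re⟪N u_k, u_k⟫ * re⟪N y_k, y_k⟫
  have hone : ∀ k, (1 : ℝ) ≤ (inner ℂ (N (u k)) (u k) : ℂ).re * (inner ℂ (N (y k)) (y k) : ℂ).re := by
    intro k
    have h1 : (inner ℂ (N (u k)) (y k) : ℂ) = 1 := by
      rw [hy]
      simp only
      rw [@inner_self_eq_norm_sq_to_K ℂ]
      rw [hnorm k]
      norm_num
    have h2 : ‖(inner ℂ (N (y k)) (u k) : ℂ)‖ = 1 := by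
      rw [hsa (y k) (u k), ← inner_conj_symm, h1]; simp
    have := CS (u k) (y k)
    rw [h1, h2] at this
    simpa using this
  -- re⟪N y_k, y_k⟫ ≤ ‖N y_k‖
  have hb_le : ∀ k, (inner ℂ (N (y k)) (y k) : ℂ).re ≤ ‖N (y k)‖ := by
    intro k
    calc (inner ℂ (N (y k)) (y k) : ℂ).re ≤ ‖(inner ℂ (N (y k)) (y k) : ℂ)‖ := Complex.re_le_norm _
    _ ≤ ‖N (y k)‖ * ‖y k‖ := norm_inner_le_norm _ _
    _ = ‖N (y k)‖ := by rw [hy]; simp only; rw [hnorm k, mul_one]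
  have hbpos : ∀ k, 0 < (inner ℂ (N (y k)) (y k) : ℂ).re := by
    intro k
    by_contra h
    push_neg at h
    have := hone k
    nlinarith [hpos (u k)]
  have hεpos : ∀ k, 0 < ‖N (y k)‖ := fun k => lt_of_lt_of_le (hbpos k) (hb_le k)
  -- re⟪N u_k, u_k⟫ ≥ 1/‖N y_k‖
  have hlb : ∀ k, (‖N (y k)‖)⁻¹ ≤ (inner ℂ (N (u k)) (u k) : ℂ).re := by
    intro k
    rw [inv_le_iff_one_le_mul₀ (hεpos k)]
    calc (1 : ℝ) ≤ (inner ℂ (N (u k)) (u k) : ℂ).re * (inner ℂ (N (y k)) (y k) : ℂ).re := hone k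
    _ ≤ (inner ℂ (N (u k)) (u k) : ℂ).re * ‖N (y k)‖ := by
        have := hpos (u k)
        exact mul_le_mul_of_nonneg_left (hb_le k) this
  have hinv : Tendsto (fun k => (‖N (y k)‖)⁻¹) atTop atTop := by
    apply Tendsto.inv_tendsto_nhdsGT_zero
    apply tendsto_nhdsWithin_of_tendsto_nhds_of_eventually_within _ hεtend
    exact Eventually.of_forall fun k => hεpos k
  exact tendsto_atTop_mono hlb hinv
end
end
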